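/- Let p be a prime, A a commutative ring of characteristic p, k ∈ ℕ, B = MvPolynomial (Fin k) A, and let E be a B-module with a stratification (∇_n)_{n : Fin k →₀ ℕ} relative to A. Define E^{(1)} = {e ∈ E | ∇_n e = 0 for all n with 0 < |n| < p}, where |n| = Σ i, n i. Then E^{(1)} is stable under multiplication by p-th powers: for every f ∈ B and e ∈ E^{(1)}, also f^p • e ∈ E^{(1)}. -/

import Mathlib

/-- The divided-power operator `D_n` on `MvPolynomial σ R`, determined on monomials by
`D_n (X ^ m) = (∏ i, Nat.choose (m i) (n i)) • X ^ (m - n)` (componentwise truncated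
subtraction). -/
noncomputable def dpOp (R : Type*) [CommRing R] (σ : Type*) [Fintype σ] (n : σ →₀ ℕ) :
    MvPolynomial σ R →ₗ[R] MvPolynomial σ R :=
  (Finsupp.lsum ℕ fun m : σ →₀ ℕ =>
    (∏ i, Nat.choose (m i) (n i)) • (MvPolynomial.monomial (m - n) : R →ₗ[R] MvPolynomial σ R))
    ∘ₗ (AddMonoidAlgebra.coeffLinearEquiv R).toLinearMap

/-- A stratification of a `MvPolynomial (Fin k) A`-module `E` relative to `A`: a family of
`A`-linear endomorphisms `∇_n` with `∇_0 = id` satisfying the generalized Leibniz rule with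
respect to the divided-power operators `D_l`. -/
structure Stratification (A : Type*) [CommRing A] (k : ℕ)
    (E : Type*) [AddCommGroup E] [Module (MvPolynomial (Fin k) A) E]
    [Module A E] [IsScalarTower A (MvPolynomial (Fin k) A) E] where
  op : (Fin k →₀ ℕ) → E →ₗ[A] E
  op_zero : op 0 = LinearMap.id
  leibniz : ∀ (n : Fin k →₀ ℕ) (f : MvPolynomial (Fin k) A) (e : E),
    op n (f • e) = ∑ l ∈ Finset.Iic n, dpOp A (Fin k) l f • op (n - l) e

lemma aux_dvd_choose (p m l : ℕ) (hp : p.Prime) (hl0 : l ≠ 0) (hlp : l < p) :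
    p ∣ (p * m).choose l := by
  rcases Nat.eq_zero_or_pos m with rfl | hm
  · simp [Nat.choose_eq_zero_of_lt (Nat.pos_of_ne_zero hl0)]
  · have hpm : 0 < p * m := Nat.mul_pos hp.pos hm
    obtain ⟨m', hm'⟩ : ∃ m', p * m = m' + 1 := ⟨p * m - 1, by omega⟩
    obtain ⟨l', rfl⟩ := Nat.exists_eq_succ_of_ne_zero hl0
    have key : (m' + 1) * m'.choose l' = (m' + 1).choose (l' + 1) * (l' + 1) :=
      Nat.add_one_mul_choose_eq m' l'
    have hd : p ∣ (m' + 1).choose (l' + 1) * (l' + 1) := by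
      rw [← key, ← hm']
      exact Dvd.dvd.mul_right (dvd_mul_right p m) _
    have hcop : Nat.Coprime p (l' + 1) :=
      (Nat.Prime.coprime_iff_not_dvd hp).mpr fun h => by
        have := Nat.le_of_dvd (Nat.succ_pos l') h; omega
    rw [hm']
    exact (Nat.Coprime.dvd_of_dvd_mul_right hcop hd)

lemma dpOp_monomial (R : Type*) [CommRing R] (σ : Type*) [Fintype σ] (n m : σ →₀ ℕ) (a : R) :
    dpOp R σ n (MvPolynomial.monomial m a)
    = (∏ i, Nat.choose (m i) (n i)) • MvPolynomial.monomial (m - n) a := by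
  classical
  have h : (AddMonoidAlgebra.coeffLinearEquiv R) (MvPolynomial.monomial m a : MvPolynomial σ R)
      = Finsupp.single m a := rfl
  show (Finsupp.lsum ℕ fun m : σ →₀ ℕ =>
    (∏ i, Nat.choose (m i) (n i)) • (MvPolynomial.monomial (m - n) : R →ₗ[R] MvPolynomial σ R))
    ((AddMonoidAlgebra.coeffLinearEquiv R) (MvPolynomial.monomial m a)) = _
  rw [h, Finsupp.lsum_apply, Finsupp.sum_single_index (by simp)]
  simp

lemma dpOp_pow_char (p : ℕ) (hp : p.Prime) (A : Type*) [CommRing A] [CharP A p] (k : ℕ)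
    (f : MvPolynomial (Fin k) A) (l : Fin k →₀ ℕ) (hl0 : 0 < ∑ i, l i) (hlp : ∑ i, l i < p) :
    dpOp A (Fin k) l (f ^ p) = 0 := by
  classical
  haveI : Fact p.Prime := ⟨hp⟩
  -- pick an index where l is nonzero
  obtain ⟨j, hj⟩ : ∃ j, l j ≠ 0 := by
    by_contra h
    push_neg at h
    simp [h] at hl0
  have hlj : l j < p := lt_of_le_of_lt (Finset.single_le_sum (fun i _ => Nat.zero_le _)
    (Finset.mem_univ j)) hlp
  -- expand f as a sum of monomials and use Frobenius
  conv_lhs => rw [MvPolynomial.as_sum f]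
  rw [sum_pow_char, map_sum]
  refine Finset.sum_eq_zero fun m _ => ?_
  rw [MvPolynomial.monomial_pow, dpOp_monomial]
  have hdvd : p ∣ ∏ i, Nat.choose ((p • m) i) (l i) := by
    refine Dvd.dvd.trans ?_ (Finset.dvd_prod_of_mem _ (Finset.mem_univ j))
    have : (p • m) j = p * m j := by simp [Finsupp.smul_apply]
    rw [this]
    exact aux_dvd_choose p (m j) (l j) hp hj hlj
  obtain ⟨c, hc⟩ := hdvd
  rw [hc, mul_smul, ← Nat.cast_smul_eq_nsmul (MvPolynomial (Fin k) A)]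
  rw [CharP.cast_eq_zero (MvPolynomial (Fin k) A) p]
  simp

/-- `E⁽¹⁾ = (e | ∇_n e = 0 for all 0 < |n| < p)` is stable under multiplication by
`p`-th powers. -/
theorem stratification_e1_stable_pth_powers (p : ℕ) (hp : p.Prime)
    (A : Type*) [CommRing A] [CharP A p] (k : ℕ)
    (E : Type*) [AddCommGroup E] [Module (MvPolynomial (Fin k) A) E]
    [Module A E] [IsScalarTower A (MvPolynomial (Fin k) A) E]
    (S : Stratification A k E) (f : MvPolynomial (Fin k) A) (e : E)
    (he : ∀ n : Fin k →₀ ℕ, 0 < ∑ i, n i → ∑ i, n i < p → S.op n e = 0) :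
    ∀ n : Fin k →₀ ℕ, 0 < ∑ i, n i → ∑ i, n i < p → S.op n (f ^ p • e) = 0 := by
  intro n hn0 hnp
  rw [S.leibniz]
  refine Finset.sum_eq_zero fun l hl => ?_
  rw [Finset.mem_Iic] at hl
  rcases eq_or_ne l 0 with rfl | hl0
  · simp only [tsub_zero, he n hn0 hnp, smul_zero]
  · have hpos : 0 < ∑ i, l i := by
      obtain ⟨j, hj⟩ : ∃ j, l j ≠ 0 := by
        by_contra h
        push_neg at h
        exact hl0 (Finsupp.ext h)
      exact lt_of_lt_of_le (Nat.pos_of_ne_zero hj)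
        (Finset.single_le_sum (fun i _ => Nat.zero_le _) (Finset.mem_univ j))
    have hle : ∑ i, l i ≤ ∑ i, n i := Finset.sum_le_sum fun i _ => hl i
    rw [dpOp_pow_char p hp A k f l hpos (lt_of_le_of_lt hle hnp)]
    simp
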